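/- For every even integer f ≥ 6, the real number arctan(2·tan(2π/f))/π is irrational; equivalently, there is no rational number q with 0 < q < 1/2 such that tan(qπ) = 2·tan(2π/f). -/

import Mathlib

open Finset in
lemma prod_comp_surj {G H M : Type*} [Group G] [Group H] [Fintype G] [Fintype H]
    [DecidableEq H] [CommMonoid M] (ψ : G →* H) (hs : Function.Surjective ψ) (F : H → M) :
    ∃ K : ℕ, K ≠ 0 ∧ Fintype.card G = Fintype.card H * K ∧
      ∏ g : G, F (ψ g) = (∏ h : H, F h) ^ K := by
  classical
  set K := #{g : G | ψ g = 1} with hK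
  have hfib : ∀ h : H, #{g : G | ψ g = h} = K := by
    intro h
    obtain ⟨g₀, hg₀⟩ := hs h
    refine Finset.card_bij' (fun g _ => g₀⁻¹ * g) (fun g _ => g₀ * g) ?_ ?_ ?_ ?_
    · intro a ha
      simp only [mem_filter, mem_univ, true_and] at ha ⊢
      simp [ha, hg₀]
    · intro a ha
      simp only [mem_filter, mem_univ, true_and] at ha ⊢
      simp [ha, hg₀]
    · intro a _; group
    · intro a _; group
  refine ⟨K, ?_, ?_, ?_⟩
  · have : (1 : G) ∈ ({g : G | ψ g = 1} : Finset G) := by simp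
    exact Finset.card_ne_zero_of_mem this
  · have := Finset.card_eq_sum_card_fiberwise
      (f := fun g : G => ψ g) (s := Finset.univ) (t := Finset.univ) (fun g _ => mem_univ _)
    simp only [hfib, Finset.sum_const, smul_eq_mul] at this
    rw [Finset.card_univ, Finset.card_univ] at this
    omega
  · rw [Finset.prod_comp F (fun g : G => ψ g),
      Finset.image_univ_of_surjective hs]
    simp only [hfib]
    exact Finset.prod_pow _ _ _

open Polynomial in
lemma prod_one_sub_pow {n : ℕ} [NeZero n] {s : ℂ} (hsn : s ^ n = 1) (hs1 : s ≠ 1) :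
    ∃ d K : ℕ, 2 ≤ d ∧ d ∣ n ∧ K ≠ 0 ∧ n.totient = d.totient * K ∧
      ∏ j : (ZMod n)ˣ, (1 - s ^ (j : ZMod n).val) = (((cyclotomic d ℤ).eval 1 : ℤ) : ℂ) ^ K := by
  classical
  have hno : IsOfFinOrder s := isOfFinOrder_iff_pow_eq_one.mpr ⟨n, NeZero.pos n, hsn⟩
  set d := orderOf s with hdDef
  have hd0 : d ≠ 0 := hno.orderOf_pos.ne'
  have hd1 : d ≠ 1 := fun h => hs1 (orderOf_eq_one_iff.mp h)
  haveI : NeZero d := ⟨hd0⟩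
  have hdvd : d ∣ n := orderOf_dvd_of_pow_eq_one hsn
  have hs : IsPrimitiveRoot s d := IsPrimitiveRoot.orderOf s
  -- rewrite powers through the units map
  have hval : ∀ j : (ZMod n)ˣ,
      s ^ (j : ZMod n).val = s ^ ((ZMod.unitsMap hdvd j : ZMod d)).val := by
    intro j
    have h1 : (ZMod.unitsMap hdvd j : ZMod d) = (((j : ZMod n).val : ℕ) : ZMod d) := by
      rw [ZMod.unitsMap_def]
      rw [Units.coe_map]
      simp only [MonoidHom.coe_coe, ZMod.castHom_apply]
      rw [← ZMod.natCast_val]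
    rw [h1, ZMod.val_natCast, pow_mod_orderOf]
  obtain ⟨K, hK0, hcard, hprod⟩ := prod_comp_surj (ZMod.unitsMap hdvd)
    (ZMod.unitsMap_surjective hdvd) (fun k : (ZMod d)ˣ => 1 - s ^ (k : ZMod d).val)
  refine ⟨d, K, ?_, hdvd, hK0, ?_, ?_⟩
  · omega
  · rwa [ZMod.card_units_eq_totient, ZMod.card_units_eq_totient] at hcard
  · have hinner : ∏ k : (ZMod d)ˣ, (1 - s ^ (k : ZMod d).val)
        = ∏ μ ∈ primitiveRoots d ℂ, (1 - μ) := by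
      refine Finset.prod_bij (fun k _ => s ^ (k : ZMod d).val) ?_ ?_ ?_ ?_
      · intro k _
        exact (mem_primitiveRoots (NeZero.pos d)).mpr
          (hs.pow_of_coprime _ (ZMod.val_coe_unit_coprime k))
      · intro k _ k' _ h
        have := hs.pow_inj (ZMod.val_lt _) (ZMod.val_lt _) h
        exact Units.ext (ZMod.val_injective d this)
      · intro μ hμ
        have hμ' : IsPrimitiveRoot μ d := (mem_primitiveRoots (NeZero.pos d)).mp hμ
        obtain ⟨i, hid, hsi⟩ := hs.eq_pow_of_pow_eq_one hμ'.pow_eq_one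
        have cop : i.Coprime d := (hs.pow_iff_coprime (NeZero.pos d) i).mp (hsi ▸ hμ')
        refine ⟨ZMod.unitOfCoprime i cop, Finset.mem_univ _, ?_⟩
        show s ^ ((ZMod.unitOfCoprime i cop : ZMod d)).val = μ
        rw [ZMod.coe_unitOfCoprime, ZMod.val_natCast, Nat.mod_eq_of_lt hid, hsi]
      · intro k _; rfl
    have hcy : (((cyclotomic d ℤ).eval 1 : ℤ) : ℂ) = ∏ μ ∈ primitiveRoots d ℂ, (1 - μ) := by
      have := cyclotomic_eq_prod_X_sub_primitiveRoots hs
      have h2 : (cyclotomic d ℂ).eval 1 = ∏ μ ∈ primitiveRoots d ℂ, (1 - μ) := by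
        rw [this, eval_prod]
        simp
      rw [← h2, ← map_cyclotomic_int d ℂ]
      rw [show ((1 : ℂ)) = ((1 : ℤ) : ℂ) by norm_num, eval_intCast_map]
      norm_num
    calc ∏ j : (ZMod n)ˣ, (1 - s ^ (j : ZMod n).val)
        = ∏ j : (ZMod n)ˣ, (1 - s ^ ((ZMod.unitsMap hdvd j : ZMod d)).val) := by
          exact Finset.prod_congr rfl fun j _ => by rw [hval j]
      _ = (∏ k : (ZMod d)ˣ, (1 - s ^ (k : ZMod d).val)) ^ K := hprod
      _ = (((cyclotomic d ℤ).eval 1 : ℤ) : ℂ) ^ K := by rw [hinner, hcy]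

lemma lt_three_pow_sub_one {p : ℕ} (hp : 2 ≤ p) : p < 3 ^ (p - 1) := by
  induction p with
  | zero => omega
  | succ n ih =>
    rcases Nat.lt_or_ge n 2 with h | h
    · interval_cases n <;> omega
    · have := ih (by omega)
      have h3 : 3 ^ (n - 1) * 3 = 3 ^ (n - 1 + 1) := by ring
      have : n + 1 < 3 ^ (n - 1) * 3 := by omega
      rw [h3] at this
      have he : n - 1 + 1 = n + 1 - 1 := by omega
      rwa [he] at this

open Polynomial in
lemma cyclo_eval_lt {d : ℕ} (hd : 2 ≤ d) :
    ((cyclotomic d ℤ).eval 1).natAbs < 3 ^ d.totient := by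
  have htot : d.totient ≠ 0 := Nat.pos_iff_ne_zero.mp (Nat.totient_pos.mpr (by omega))
  by_cases h : IsPrimePow d
  · obtain ⟨p, k, hp, hk, rfl⟩ := h
    have hpp : p.Prime := hp.nat_prime
    haveI : Fact p.Prime := ⟨hpp⟩
    obtain ⟨k', rfl⟩ : ∃ k', k = k' + 1 := ⟨k - 1, by omega⟩
    rw [Polynomial.eval_one_cyclotomic_prime_pow]
    simp only [Int.natAbs_natCast]
    have h1 : p - 1 ≤ (p ^ (k' + 1)).totient := by
      rw [Nat.totient_prime_pow hpp (by omega)]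
      have h2 : 1 ≤ p ^ k' := Nat.one_le_pow _ _ hpp.pos
      have : k' + 1 - 1 = k' := rfl
      rw [this]
      nlinarith
    calc p < 3 ^ (p - 1) := lt_three_pow_sub_one hpp.two_le
    _ ≤ 3 ^ (p ^ (k' + 1)).totient := Nat.pow_le_pow_right (by omega) h1
  · rw [Polynomial.eval_one_cyclotomic_not_prime_pow (R := ℤ) ?_]
    · simpa using Nat.one_lt_pow htot (by omega)
    · intro p hp k hk
      exact h ⟨p, k, hp.prime, by
        rcases Nat.eq_zero_or_pos k with rfl | h0
        · simp at hk; omega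
        · exact ⟨h0, hk⟩⟩
open Polynomial Complex in
lemma roots_of_unity_eq {u v : ℂ} {n : ℕ} (hn : n ≠ 0) (hu : u ^ n = 1) (hv : v ^ n = 1)
    (hE : 1 - u * v = 3 * (v - u)) : u = v := by
  by_contra huv
  haveI : NeZero n := ⟨hn⟩
  set ζ := Complex.exp (2 * Real.pi * I / n) with hζdef
  have hζ : IsPrimitiveRoot ζ n := Complex.isPrimitiveRoot_exp n hn
  obtain ⟨a, -, hua⟩ := hζ.eq_pow_of_pow_eq_one hu
  obtain ⟨b, -, hvb⟩ := hζ.eq_pow_of_pow_eq_one hv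
  set P : Polynomial ℚ := C 1 - X ^ (a + b) - C 3 * X ^ b + C 3 * X ^ a with hPdef
  have haeval : ∀ w : ℂ, aeval w P = 1 - w ^ (a + b) - 3 * w ^ b + 3 * w ^ a := by
    intro w; simp [hPdef]
  have hPζ : aeval ζ P = 0 := by
    rw [haeval, pow_add, hua, hvb]
    linear_combination hE
  have hmin : cyclotomic n ℚ ∣ P := by
    rw [Polynomial.cyclotomic_eq_minpoly_rat hζ (Nat.pos_of_ne_zero hn)]
    exact minpoly.dvd ℚ ζ hPζ
  have hroot : ∀ j : ℕ, Nat.Coprime j n → 1 - (u * v) ^ j = 3 * (v ^ j - u ^ j) := by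
    intro j hj
    have hζj : IsPrimitiveRoot (ζ ^ j) n := hζ.pow_of_coprime j hj
    have h0 : aeval (ζ ^ j) (cyclotomic n ℚ) = 0 := by
      have hr : IsRoot (cyclotomic n ℂ) (ζ ^ j) :=
        hζj.isRoot_cyclotomic (Nat.pos_of_ne_zero hn)
      rw [aeval_def, ← eval_map, map_cyclotomic]
      exact hr
    obtain ⟨Q, hQ⟩ := hmin
    have hz : aeval (ζ ^ j) P = 0 := by rw [hQ, map_mul, h0, zero_mul]
    rw [haeval] at hz
    have e1 : (ζ ^ j) ^ (a + b) = (u * v) ^ j := by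
      rw [← pow_mul, mul_comm j, pow_mul, pow_add, hua, hvb]
    have e2 : (ζ ^ j) ^ a = u ^ j := by rw [← pow_mul, mul_comm j, pow_mul, hua]
    have e3 : (ζ ^ j) ^ b = v ^ j := by rw [← pow_mul, mul_comm j, pow_mul, hvb]
    rw [e1, e2, e3] at hz
    linear_combination hz
  have hv0 : v ≠ 0 := by
    intro h; rw [h, zero_pow hn] at hv; exact zero_ne_one hv
  set s := u * v with hsdef
  set r := u * v⁻¹ with hrdef
  have hs1 : s ≠ 1 := by
    intro h
    apply huv
    have h3 : (3 : ℂ) * (v - u) = 0 := by rw [← hE, h]; norm_num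
    have h2 : v - u = 0 := by
      rcases mul_eq_zero.mp h3 with h' | h'
      · norm_num at h'
      · exact h'
    linear_combination -h2
  have hr1 : r ≠ 1 := by
    intro h
    apply huv
    rw [hrdef] at h
    field_simp at h
    exact h
  have hsn : s ^ n = 1 := by rw [hsdef, mul_pow, hu, hv, one_mul]
  have hrn : r ^ n = 1 := by
    rw [hrdef, mul_pow, hu, inv_pow, hv, inv_one, one_mul]
  obtain ⟨d, K, hd2, hddvd, hK0, htotK, hprodS⟩ := prod_one_sub_pow hsn hs1
  obtain ⟨d', K', hd2', hddvd', hK0', htotK', hprodR⟩ := prod_one_sub_pow hrn hr1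
  have hfac : ∀ j : (ZMod n)ˣ, (1 - s ^ (j : ZMod n).val)
      = 3 * v ^ (j : ZMod n).val * (1 - r ^ (j : ZMod n).val) := by
    intro j
    have h := hroot _ (ZMod.val_coe_unit_coprime j)
    have hvne : v ^ (j : ZMod n).val ≠ 0 := pow_ne_zero _ hv0
    rw [hsdef]
    rw [h]
    rw [hrdef, mul_pow, inv_pow]
    field_simp
  have hmain : (((cyclotomic d ℤ).eval 1 : ℤ) : ℂ) ^ K
      = 3 ^ n.totient * (∏ j : (ZMod n)ˣ, v ^ (j : ZMod n).val)
        * (((cyclotomic d' ℤ).eval 1 : ℤ) : ℂ) ^ K' := by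
    rw [← hprodS, ← hprodR]
    calc ∏ j : (ZMod n)ˣ, (1 - s ^ (j : ZMod n).val)
        = ∏ j : (ZMod n)ˣ, (3 * v ^ (j : ZMod n).val * (1 - r ^ (j : ZMod n).val)) :=
          Finset.prod_congr rfl fun j _ => hfac j
      _ = (∏ _j : (ZMod n)ˣ, (3 : ℂ)) * (∏ j : (ZMod n)ˣ, v ^ (j : ZMod n).val)
          * ∏ j : (ZMod n)ˣ, (1 - r ^ (j : ZMod n).val) := by
          rw [← Finset.prod_mul_distrib, ← Finset.prod_mul_distrib]
      _ = 3 ^ n.totient * (∏ j : (ZMod n)ˣ, v ^ (j : ZMod n).val)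
          * ∏ j : (ZMod n)ˣ, (1 - r ^ (j : ZMod n).val) := by
          rw [Finset.prod_const, Finset.card_univ, ZMod.card_units_eq_totient]
  -- pass to absolute values / natural numbers
  have habsv : ‖v‖ = 1 := Complex.norm_eq_one_of_pow_eq_one hv hn
  have habsprod : ‖∏ j : (ZMod n)ˣ, v ^ (j : ZMod n).val‖ = 1 := by
    rw [norm_prod]
    refine Finset.prod_eq_one fun j _ => ?_
    rw [norm_pow, habsv, one_pow]
  set A := ((cyclotomic d ℤ).eval 1).natAbs with hA
  set B := ((cyclotomic d' ℤ).eval 1).natAbs with hB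
  have hreal : (A : ℝ) ^ K = 3 ^ n.totient * (B : ℝ) ^ K' := by
    have h := congrArg norm hmain
    rw [norm_pow, norm_mul, norm_mul, norm_pow, norm_pow, habsprod, mul_one] at h
    rw [Complex.norm_intCast, Complex.norm_intCast] at h
    have h3 : ‖(3:ℂ)‖ = 3 := by norm_num
    rw [h3] at h
    rw [hA, hB, Nat.cast_natAbs, Nat.cast_natAbs, Int.cast_abs, Int.cast_abs]
    exact h
  have hNat : A ^ K = 3 ^ n.totient * B ^ K' := by exact_mod_cast hreal
  have hBne : B ≠ 0 := by
    intro h0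
    have : (((cyclotomic d' ℤ).eval 1 : ℤ) : ℂ) ^ K' = 0 := by
      have : ((cyclotomic d' ℤ).eval 1 : ℤ) = 0 := by
        rwa [hB, Int.natAbs_eq_zero] at h0
      rw [this]
      simp [zero_pow hK0']
    rw [← hprodR] at this
    have hne : ∀ j : (ZMod n)ˣ, (1 - r ^ (j : ZMod n).val) ≠ 0 := by
      intro j hzero
      have hr' : r ^ (j : ZMod n).val = 1 := by linear_combination -hzero
      have hdvd1 : orderOf r ∣ (j : ZMod n).val := orderOf_dvd_of_pow_eq_one hr'
      have hdvd2 : orderOf r ∣ n := orderOf_dvd_of_pow_eq_one hrn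
      have : orderOf r ∣ Nat.gcd (j : ZMod n).val n := Nat.dvd_gcd hdvd1 hdvd2
      rw [(ZMod.val_coe_unit_coprime j)] at this
      have : orderOf r = 1 := Nat.eq_one_of_dvd_one this
      exact hr1 (orderOf_eq_one_iff.mp this)
    exact Finset.prod_ne_zero_iff.mpr (fun j _ => hne j) this
  have hAlt : A < 3 ^ d.totient := cyclo_eval_lt hd2
  have hlt : A ^ K < 3 ^ n.totient := by
    rw [htotK, pow_mul]
    exact Nat.pow_lt_pow_left hAlt hK0
  have hge : 3 ^ n.totient ≤ A ^ K := by
    rw [hNat]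
    have : 1 ≤ B ^ K' := Nat.one_le_pow _ _ (Nat.pos_of_ne_zero hBne)
    nlinarith [Nat.pow_pos (n := n.totient) (show 0 < 3 by norm_num)]
  omega
open Complex in
lemma no_rat_sol (f : ℕ) (hf : 6 ≤ f) (q : ℚ) (hq0 : 0 < q) (hq2 : q < 1/2)
    (h : Real.tan ((q : ℝ) * Real.pi) = 2 * Real.tan (2 * Real.pi / f)) : False := by
  have hπ : (0:ℝ) < Real.pi := Real.pi_pos
  have hf0 : (0:ℝ) < f := by
    have : (6:ℝ) ≤ f := by exact_mod_cast hf
    linarith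
  have hq0' : (0:ℝ) < q := by exact_mod_cast hq0
  have hq2' : (q:ℝ) < 1/2 := by
    have h12 : ((1/2 : ℚ) : ℝ) = 1/2 := by norm_num
    rw [← h12]
    exact_mod_cast hq2
  set α : ℝ := (q:ℝ) * Real.pi with hαdef
  set β : ℝ := 2 * Real.pi / f with hβdef
  have hα0 : 0 < α := mul_pos hq0' hπ
  have hα2 : α < Real.pi / 2 := by
    rw [hαdef]
    nlinarith
  have hβ0 : 0 < β := by rw [hβdef]; positivity
  have hβ2 : β < Real.pi / 2 := by
    rw [hβdef, div_lt_iff₀ hf0]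
    have : (6:ℝ) ≤ f := by exact_mod_cast hf
    nlinarith
  have hcosα : 0 < Real.cos α := Real.cos_pos_of_mem_Ioo ⟨by linarith, hα2⟩
  have hcosβ : 0 < Real.cos β := Real.cos_pos_of_mem_Ioo ⟨by linarith, hβ2⟩
  have hS : Real.sin α * Real.cos β = 2 * Real.cos α * Real.sin β := by
    rw [Real.tan_eq_sin_div_cos, Real.tan_eq_sin_div_cos] at h
    field_simp at h
    linear_combination h
  have hSc : Complex.sin α * Complex.cos β = 2 * Complex.cos α * Complex.sin β := by
    have := congrArg (Complex.ofReal) hS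
    push_cast at this
    exact_mod_cast hS
  set x := Complex.exp (α * I) with hxdef
  set y := Complex.exp (β * I) with hydef
  have hx : x * x⁻¹ = 1 := mul_inv_cancel₀ (Complex.exp_ne_zero _)
  have hy : y * y⁻¹ = 1 := mul_inv_cancel₀ (Complex.exp_ne_zero _)
  have hxneg : Complex.exp (-(α:ℂ) * I) = x⁻¹ := by
    rw [show (-(α:ℂ)) * I = -((α:ℂ) * I) by ring, Complex.exp_neg, hxdef]
  have hyneg : Complex.exp (-(β:ℂ) * I) = y⁻¹ := by
    rw [show (-(β:ℂ)) * I = -((β:ℂ) * I) by ring, Complex.exp_neg, hydef]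
  have hE : 1 - x ^ 2 * y ^ 2 = 3 * (y ^ 2 - x ^ 2) := by
    simp only [Complex.sin, Complex.cos] at hSc
    rw [hxneg, hyneg, ← hxdef, ← hydef] at hSc
    linear_combination (4 * I * x * y) * hSc + (3 * y ^ 2 - y * y⁻¹) * hx + (-3 * x ^ 2 - 1) * hy
      + (x * y * x⁻¹ * y⁻¹ - 3 * x * y ^ 2 * x⁻¹ + 3 * x ^ 2 * y * y⁻¹ - x ^ 2 * y ^ 2) *
        Complex.I_sq
  have hu : (x ^ 2) ^ q.den = 1 := by
    rw [← pow_mul, hxdef, ← Complex.exp_nat_mul]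
    have hqden : ((q.den : ℝ)) * (q : ℝ) = (q.num : ℝ) := by
      rw [Rat.cast_def]
      field_simp
    have harg : ((2 * q.den : ℕ) : ℂ) * ((α:ℂ) * I) = (q.num : ℂ) * (2 * (Real.pi:ℂ) * I) := by
      have hqdenC : ((q.den : ℂ)) * (q : ℂ) = (q.num : ℂ) := by exact_mod_cast hqden
      rw [hαdef]
      push_cast
      linear_combination (2 * (Real.pi:ℂ) * I) * hqdenC
    rw [harg]
    exact_mod_cast Complex.exp_int_mul_two_pi_mul_I q.num
  have hv : (y ^ 2) ^ f = 1 := by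
    rw [← pow_mul, hydef, ← Complex.exp_nat_mul]
    have harg : ((2 * f : ℕ) : ℂ) * ((β:ℂ) * I) = ((2:ℤ) : ℂ) * (2 * (Real.pi:ℂ) * I) := by
      rw [hβdef]
      have hfC : (f:ℂ) ≠ 0 := by exact_mod_cast hf0.ne'
      push_cast
      field_simp
    rw [harg]
    exact_mod_cast Complex.exp_int_mul_two_pi_mul_I 2
  have hn : q.den * f ≠ 0 :=
    Nat.mul_ne_zero q.den_ne_zero (by omega)
  have hu' : (x ^ 2) ^ (q.den * f) = 1 := by rw [pow_mul, hu, one_pow]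
  have hv' : (y ^ 2) ^ (q.den * f) = 1 := by rw [mul_comm, pow_mul, hv, one_pow]
  have huv : x ^ 2 = y ^ 2 := roots_of_unity_eq hn hu' hv' hE
  rw [← huv] at hE
  have h1 : x ^ 2 * x ^ 2 = 1 := by linear_combination -hE
  have hx2 : x ^ 2 = Complex.exp ((2 * α : ℝ) * I) := by
    rw [hxdef, ← Complex.exp_nat_mul]
    push_cast
    ring_nf
  have him : (x ^ 2).im = Real.sin (2 * α) := by rw [hx2, Complex.exp_ofReal_mul_I_im]
  have hsin : 0 < Real.sin (2 * α) :=
    Real.sin_pos_of_pos_of_lt_pi (by linarith) (by linarith)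
  rcases mul_self_eq_one_iff.mp h1 with h' | h' <;> rw [h'] at him <;> simp at him <;> linarith

open Real

theorem arctan_two_tan_irrational (f : ℕ) (hEven : Even f) (hf : 6 ≤ f) :
    Irrational (arctan (2 * tan (2 * π / f)) / π) ∧
    ¬ ∃ q : ℚ, 0 < q ∧ q < 1/2 ∧ tan ((q : ℝ) * π) = 2 * tan (2 * π / f) := by
  have hπ : (0:ℝ) < π := Real.pi_pos
  have hf0 : (0:ℝ) < f := by
    have : (6:ℝ) ≤ f := by exact_mod_cast hf
    linarith
  have hβ0 : 0 < 2 * π / f := by positivity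
  have hβ2 : 2 * π / f < π / 2 := by
    rw [div_lt_iff₀ hf0]
    have : (6:ℝ) ≤ f := by exact_mod_cast hf
    nlinarith
  have htanβ : 0 < tan (2 * π / f) := tan_pos_of_pos_of_lt_pi_div_two hβ0 hβ2
  constructor
  · rintro ⟨q, hq⟩
    have harc0 : 0 < arctan (2 * tan (2 * π / f)) := by
      have := arctan_strictMono (show (0:ℝ) < 2 * tan (2 * π / f) by linarith)
      rwa [arctan_zero] at this
    have harc2 : arctan (2 * tan (2 * π / f)) < π / 2 := arctan_lt_pi_div_two _
    have hqeq : (q : ℝ) * π = arctan (2 * tan (2 * π / f)) := by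
      rw [hq]
      field_simp
    have hq0 : 0 < q := by
      have h0 : (0:ℝ) < (q:ℝ) := by
        by_contra hcon
        push_neg at hcon
        nlinarith
      exact_mod_cast h0
    have hq2 : q < 1/2 := by
      have h2 : (q:ℝ) < 1/2 := by nlinarith
      have h12 : ((1/2 : ℚ) : ℝ) = 1/2 := by norm_num
      rw [← h12] at h2
      exact_mod_cast h2
    refine no_rat_sol f hf q hq0 hq2 ?_
    rw [hqeq, tan_arctan]
  · rintro ⟨q, hq0, hq2, heq⟩
    exact no_rat_sol f hf q hq0 hq2 heq
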